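/- Let L : X × Y → ℝ be convex-concave on a product of real Hilbert spaces with nonempty saddle-point set S × M, and for t ≥ t₀ let (x_t, λ_t) be the saddle point of L_t(x,λ) = L(x,λ) + (ε(t)/2)(‖x‖² − ‖λ‖²), where ε(t) → 0 as t → ∞. Then (x_t, λ_t) converges strongly as t → ∞ to the element of minimal norm of S × M, i.e. to proj_{S×M}(0,0). -/

import Mathlib

open Set Filter

lemma combo_norm_sq {X : Type*} [NormedAddCommGroup X] [InnerProductSpace ℝ X]
    (a b : X) (θ : ℝ) :
    ‖(1-θ)•a + θ•b‖^2 = (1-θ)*‖a‖^2 + θ*‖b‖^2 - θ*(1-θ)*‖b-a‖^2 := by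
  simp only [← real_inner_self_eq_norm_sq, inner_add_left, inner_add_right,
    inner_sub_left, inner_sub_right, real_inner_smul_left, real_inner_smul_right,
    real_inner_comm b a]
  ring

lemma strong_min {X : Type*} [NormedAddCommGroup X] [InnerProductSpace ℝ X]
    (g : X → ℝ) (hg : ConvexOn ℝ univ g) (μ : ℝ) (hμ : 0 ≤ μ) (xs : X)
    (hmin : ∀ x, g xs + μ/2*‖xs‖^2 ≤ g x + μ/2*‖x‖^2) (x : X) :
    g xs + μ/2*‖xs‖^2 + μ/2*‖x - xs‖^2 ≤ g x + μ/2*‖x‖^2 := by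
  have key : ∀ θ : ℝ, θ ∈ Set.Ioc (0:ℝ) 1 →
      g xs + μ/2*‖xs‖^2 + μ/2*((1-θ)*‖x-xs‖^2) ≤ g x + μ/2*‖x‖^2 := by
    intro θ ⟨hθ0, hθ1⟩
    have hc := hg.2 (mem_univ xs) (mem_univ x) (by linarith : (0:ℝ) ≤ 1-θ) hθ0.le
      (by ring : (1-θ) + θ = 1)
    simp only [smul_eq_mul] at hc
    have hn := combo_norm_sq xs x θ
    have hm := hmin ((1-θ)•xs + θ•x)
    have h2 : θ * (g xs + μ/2*‖xs‖^2 + μ/2*((1-θ)*‖x-xs‖^2)) ≤ θ * (g x + μ/2*‖x‖^2) := by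
      nlinarith [hm, hc, hn]
    exact le_of_mul_le_mul_left h2 hθ0
  have hseq : ∀ n : ℕ, g xs + μ/2*‖xs‖^2 + μ/2*((1-1/(n+1))*‖x-xs‖^2) ≤ g x + μ/2*‖x‖^2 := by
    intro n
    refine key _ ⟨by positivity, ?_⟩
    rw [div_le_one (by positivity)]
    linarith [Nat.cast_nonneg (α := ℝ) n]
  have hlim : Tendsto (fun n : ℕ => g xs + μ/2*‖xs‖^2 + μ/2*((1-1/(n+1))*‖x-xs‖^2)) atTop
      (nhds (g xs + μ/2*‖xs‖^2 + μ/2*((1-0)*‖x-xs‖^2))) := by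
    refine tendsto_const_nhds.add (Tendsto.const_mul _ (Tendsto.mul_const _ ?_))
    exact tendsto_const_nhds.sub tendsto_one_div_add_atTop_nhds_zero_nat
  have := le_of_tendsto hlim (Filter.Eventually.of_forall hseq)
  linarith

theorem stmt7 {X Y : Type*} [NormedAddCommGroup X] [InnerProductSpace ℝ X] [CompleteSpace X]
    [NormedAddCommGroup Y] [InnerProductSpace ℝ Y] [CompleteSpace Y]
    (L : X → Y → ℝ)
    (hconv : ∀ lam, ConvexOn ℝ univ (fun x => L x lam))
    (hconc : ∀ x, ConcaveOn ℝ univ (fun lam => L x lam))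
    (hlscx : ∀ lam, LowerSemicontinuous (fun x => L x lam))
    (hlscy : ∀ x, LowerSemicontinuous (fun lam => -L x lam))
    (SP : Set (X × Y))
    (hSP : SP = {p | ∀ x lam, L p.1 lam ≤ L p.1 p.2 ∧ L p.1 p.2 ≤ L x p.2})
    (hne : SP.Nonempty)
    (t₀ : ℝ) (ε : ℝ → ℝ) (hεpos : ∀ t ∈ Ici t₀, 0 < ε t)
    (hεcont : ContinuousOn ε (Ici t₀))
    (hε0 : Tendsto ε atTop (nhds 0))
    (z : ℝ → X × Y)
    (hsad : ∀ t ∈ Ici t₀, ∀ x lam,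
      L (z t).1 lam + ε t / 2 * (‖(z t).1‖ ^ 2 - ‖lam‖ ^ 2)
        ≤ L (z t).1 (z t).2 + ε t / 2 * (‖(z t).1‖ ^ 2 - ‖(z t).2‖ ^ 2) ∧
      L (z t).1 (z t).2 + ε t / 2 * (‖(z t).1‖ ^ 2 - ‖(z t).2‖ ^ 2)
        ≤ L x (z t).2 + ε t / 2 * (‖x‖ ^ 2 - ‖(z t).2‖ ^ 2)) :
    ∃ p ∈ SP, (∀ q ∈ SP, ‖p.1‖ ^ 2 + ‖p.2‖ ^ 2 ≤ ‖q.1‖ ^ 2 + ‖q.2‖ ^ 2) ∧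
      Tendsto z atTop (nhds p) := by
  subst hSP
  set N : ℝ → ℝ := fun t => ‖(z t).1‖^2 + ‖(z t).2‖^2 with hNdef
  -- strengthened saddle inequalities
  have hA : ∀ t ∈ Ici t₀, ∀ x, L (z t).1 (z t).2 + ε t/2*‖(z t).1‖^2 + ε t/2*‖x-(z t).1‖^2
      ≤ L x (z t).2 + ε t/2*‖x‖^2 := by
    intro t ht x
    refine strong_min (fun x => L x (z t).2) (hconv _) (ε t) (hεpos t ht).le (z t).1 ?_ x
    intro x'
    have := (hsad t ht x' (z t).2).2
    linarith
  have hB : ∀ t ∈ Ici t₀, ∀ lam, -L (z t).1 (z t).2 + ε t/2*‖(z t).2‖^2 + ε t/2*‖lam-(z t).2‖^2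
      ≤ -L (z t).1 lam + ε t/2*‖lam‖^2 := by
    intro t ht lam
    refine strong_min (fun lam => -L (z t).1 lam) (hconc _).neg (ε t) (hεpos t ht).le (z t).2 ?_ lam
    intro lam'
    have := (hsad t ht (z t).1 lam').1
    linarith
  -- key inequality against saddle points
  have hKey1 : ∀ q ∈ {p : X × Y | ∀ x lam, L p.1 lam ≤ L p.1 p.2 ∧ L p.1 p.2 ≤ L x p.2},
      ∀ t ∈ Ici t₀, N t + ‖q.1-(z t).1‖^2 + ‖q.2-(z t).2‖^2 ≤ ‖q.1‖^2 + ‖q.2‖^2 := by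
    intro q hq t ht
    have h1 := hA t ht q.1
    have h2 := hB t ht q.2
    have h3 := (hq (z t).1 (z t).2).1
    have h4 := (hq (z t).1 (z t).2).2
    have hε := hεpos t ht
    have h6 : ε t/2 * (N t + ‖q.1-(z t).1‖^2 + ‖q.2-(z t).2‖^2)
        ≤ ε t/2 * (‖q.1‖^2 + ‖q.2‖^2) := by
      simp only [hNdef]
      ring_nf
      ring_nf at h1 h2
      linarith
    exact le_of_mul_le_mul_left h6 (by linarith)
  -- two-time comparison
  have hKey2 : ∀ s ∈ Ici t₀, ∀ t ∈ Ici t₀,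
      (ε t + ε s) * (‖(z s).1-(z t).1‖^2 + ‖(z s).2-(z t).2‖^2) ≤ (ε s - ε t) * (N t - N s) := by
    intro s hs t ht
    have h1 := hA t ht (z s).1
    have h2 := hB t ht (z s).2
    have h3 := hA s hs (z t).1
    have h4 := hB s hs (z t).2
    rw [norm_sub_rev ((z t).1)] at h3
    rw [norm_sub_rev ((z t).2)] at h4
    simp only [hNdef]
    ring_nf
    ring_nf at h1 h2 h3 h4
    linarith
  have hDnn : ∀ s t : ℝ, (0:ℝ) ≤ ‖(z s).1-(z t).1‖^2 + ‖(z s).2-(z t).2‖^2 := by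
    intro s t; positivity
  -- antitonicity of N w.r.t. ε
  have hAnti : ∀ s ∈ Ici t₀, ∀ t ∈ Ici t₀, ε t ≤ ε s → N s ≤ N t := by
    intro s hs t ht hle
    by_contra h
    push_neg at h
    have k := hKey2 s hs t ht
    have hD := hDnn s t
    have hps := hεpos s hs
    have hpt := hεpos t ht
    rcases eq_or_lt_of_le hle with heq | hlt
    · have hD0 : ‖(z s).1-(z t).1‖^2 + ‖(z s).2-(z t).2‖^2 = 0 := by nlinarith
      have e1 : (z s).1 = (z t).1 := by
        have : ‖(z s).1-(z t).1‖^2 = 0 := by nlinarith [hDnn s t, sq_nonneg ‖(z s).2-(z t).2‖]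
        have := pow_eq_zero_iff (n := 2) (by norm_num) |>.mp this
        rwa [norm_eq_zero, sub_eq_zero] at this
      have e2 : (z s).2 = (z t).2 := by
        have : ‖(z s).2-(z t).2‖^2 = 0 := by nlinarith [sq_nonneg ‖(z s).1-(z t).1‖]
        have := pow_eq_zero_iff (n := 2) (by norm_num) |>.mp this
        rwa [norm_eq_zero, sub_eq_zero] at this
      simp only [hNdef, e1, e2] at h
      exact lt_irrefl _ h
    · nlinarith
  -- N is bounded above on Ici t₀ by any saddle value
  obtain ⟨q₀, hq₀⟩ := hne
  have hBdd : ∀ t ∈ Ici t₀, N t ≤ ‖q₀.1‖^2 + ‖q₀.2‖^2 := by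
    intro t ht
    have := hKey1 q₀ hq₀ t ht
    have n1 : (0:ℝ) ≤ ‖q₀.1-(z t).1‖^2 := by positivity
    have n2 : (0:ℝ) ≤ ‖q₀.2-(z t).2‖^2 := by positivity
    linarith
  -- N converges to its sup
  set S : Set ℝ := N '' Ici t₀ with hSdef
  have hSne : S.Nonempty := ⟨N t₀, t₀, self_mem_Ici, rfl⟩
  have hSbdd : BddAbove S := by
    refine ⟨‖q₀.1‖^2 + ‖q₀.2‖^2, ?_⟩
    rintro _ ⟨t, ht, rfl⟩
    exact hBdd t ht
  set ℓ := sSup S with hℓdef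
  have hNl : Tendsto N atTop (nhds ℓ) := by
    rw [Metric.tendsto_nhds]
    intro δ hδ
    obtain ⟨_, ⟨s, hs, rfl⟩, hgt⟩ := exists_lt_of_lt_csSup hSne (by linarith : ℓ - δ < ℓ)
    filter_upwards [hε0.eventually_lt_const (hεpos s hs), eventually_ge_atTop t₀] with t h1 h2
    have hmono := hAnti s hs t h2 h1.le
    have hub : N t ≤ ℓ := le_csSup hSbdd ⟨t, h2, rfl⟩
    rw [Real.dist_eq, abs_lt]
    constructor <;> linarith
  -- Cauchy estimate
  have hD2 : ∀ s ∈ Ici t₀, ∀ t ∈ Ici t₀,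
      ‖(z s).1-(z t).1‖^2 + ‖(z s).2-(z t).2‖^2 ≤ |N t - N s| := by
    intro s hs t ht
    have k := hKey2 s hs t ht
    have hps := hεpos s hs
    have hpt := hεpos t ht
    have h1 : (ε s - ε t) * (N t - N s) ≤ (ε t + ε s) * |N t - N s| := by
      rcases abs_cases (N t - N s) with ⟨h, h'⟩ | ⟨h, h'⟩ <;> nlinarith
    have h2 : (ε t + ε s) * (‖(z s).1-(z t).1‖^2 + ‖(z s).2-(z t).2‖^2)
        ≤ (ε t + ε s) * |N t - N s| := le_trans k h1
    exact le_of_mul_le_mul_left h2 (by linarith)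
  -- both components are Cauchy
  have hCauchyAux : ∀ δ : ℝ, 0 < δ → ∃ T : ℝ, T ∈ Ici t₀ ∧ ∀ s ≥ T, ∀ t ≥ T,
      ‖(z s).1-(z t).1‖^2 + ‖(z s).2-(z t).2‖^2 < δ^2 := by
    intro δ hδ
    have hev := (Metric.tendsto_nhds.mp hNl) (δ^2/2) (by positivity)
    obtain ⟨T₁, hT₁⟩ := eventually_atTop.mp (hev.and (eventually_ge_atTop t₀))
    refine ⟨max T₁ t₀, Set.mem_Ici.mpr (le_max_right _ _), fun s hs t ht => ?_⟩
    have hs1 := hT₁ s (le_trans (le_max_left _ _) hs)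
    have ht1 := hT₁ t (le_trans (le_max_left _ _) ht)
    have hd := hD2 s hs1.2 t ht1.2
    have : |N t - N s| < δ^2 := by
      rw [Real.dist_eq] at hs1 ht1
      calc |N t - N s| ≤ |N t - ℓ| + |ℓ - N s| := by
            have := abs_sub_le (N t) ℓ (N s)
            simpa [abs_sub_comm] using this
        _ < δ^2 := by
            rw [abs_sub_comm ℓ (N s)]
            linarith [ht1.1, hs1.1]
    linarith
  have hC1 : CauchySeq (fun t => (z t).1) := by
    rw [Metric.cauchySeq_iff]
    intro δ hδ
    obtain ⟨T, _, hT⟩ := hCauchyAux δ hδ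
    refine ⟨T, fun s hs t ht => ?_⟩
    rw [dist_eq_norm]
    have h := hT s hs t ht
    have n2 : (0:ℝ) ≤ ‖(z s).2-(z t).2‖^2 := by positivity
    have : ‖(z s).1-(z t).1‖^2 < δ^2 := by linarith
    exact lt_of_pow_lt_pow_left₀ 2 hδ.le this
  have hC2 : CauchySeq (fun t => (z t).2) := by
    rw [Metric.cauchySeq_iff]
    intro δ hδ
    obtain ⟨T, _, hT⟩ := hCauchyAux δ hδ
    refine ⟨T, fun s hs t ht => ?_⟩
    rw [dist_eq_norm]
    have h := hT s hs t ht
    have n1 : (0:ℝ) ≤ ‖(z s).1-(z t).1‖^2 := by positivity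
    have : ‖(z s).2-(z t).2‖^2 < δ^2 := by linarith
    exact lt_of_pow_lt_pow_left₀ 2 hδ.le this
  obtain ⟨p1, hp1⟩ := cauchySeq_tendsto_of_complete hC1
  obtain ⟨p2, hp2⟩ := cauchySeq_tendsto_of_complete hC2
  -- combined saddle inequality for limiting argument
  have hcomb : ∀ t ∈ Ici t₀, ∀ x lam,
      L (z t).1 lam ≤ L x (z t).2 + ε t/2*(‖x‖^2 + ‖lam‖^2) := by
    intro t ht x lam
    have h1 := (hsad t ht x lam).1
    have h2 := (hsad t ht x lam).2
    have hε := (hεpos t ht).le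
    have n1 : (0:ℝ) ≤ ‖(z t).1‖^2 := by positivity
    have n2 : (0:ℝ) ≤ ‖(z t).2‖^2 := by positivity
    nlinarith
  -- limit is a saddle point
  have hkeyL : ∀ x lam, L p1 lam ≤ L x p2 := by
    intro x lam
    by_contra h
    push_neg at h
    set δ := (L p1 lam - L x p2)/4 with hδdef
    have hδ : 0 < δ := by simp only [hδdef]; linarith
    have e1 : ∀ᶠ t in atTop, L p1 lam - δ < L (z t).1 lam :=
      hp1.eventually (hlscx lam p1 (L p1 lam - δ) (by show L p1 lam - δ < L p1 lam; linarith))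
    have e2 : ∀ᶠ t in atTop, -L x p2 - δ < -L x (z t).2 :=
      hp2.eventually (hlscy x p2 (-L x p2 - δ) (by show -L x p2 - δ < -L x p2; linarith))
    have e3 : ∀ᶠ t in atTop, ε t/2*(‖x‖^2 + ‖lam‖^2) < δ := by
      have ht : Tendsto (fun t => ε t/2*(‖x‖^2 + ‖lam‖^2)) atTop (nhds (0/2*(‖x‖^2 + ‖lam‖^2))) :=
        (hε0.div_const 2).mul_const _
      simp only [zero_div, zero_mul] at ht
      exact ht.eventually_lt_const hδ
    obtain ⟨t, h1, h2, h3, ht0⟩ := (e1.and (e2.and (e3.and (eventually_ge_atTop t₀)))).exists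
    have := hcomb t ht0 x lam
    simp only [hδdef] at h1 h2 h3
    linarith
  have hmem : (p1, p2) ∈ {p : X × Y | ∀ x lam, L p.1 lam ≤ L p.1 p.2 ∧ L p.1 p.2 ≤ L x p.2} := by
    intro x lam
    exact ⟨hkeyL p1 lam, hkeyL x p2⟩
  refine ⟨(p1, p2), hmem, ?_, ?_⟩
  · intro q hq
    have hlim : Tendsto (fun t => N t + ‖q.1-(z t).1‖^2 + ‖q.2-(z t).2‖^2) atTop
        (nhds ((‖p1‖^2 + ‖p2‖^2) + ‖q.1-p1‖^2 + ‖q.2-p2‖^2)) := by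
      refine Tendsto.add (Tendsto.add (Tendsto.add ?_ ?_) ?_) ?_
      · exact (hp1.norm.pow 2)
      · exact (hp2.norm.pow 2)
      · exact ((tendsto_const_nhds.sub hp1).norm.pow 2)
      · exact ((tendsto_const_nhds.sub hp2).norm.pow 2)
    have hevb : ∀ᶠ t in atTop, N t + ‖q.1-(z t).1‖^2 + ‖q.2-(z t).2‖^2 ≤ ‖q.1‖^2 + ‖q.2‖^2 := by
      filter_upwards [eventually_ge_atTop t₀] with t ht
      exact hKey1 q hq t ht
    have := le_of_tendsto hlim hevb
    have n1 : (0:ℝ) ≤ ‖q.1-p1‖^2 := by positivity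
    have n2 : (0:ℝ) ≤ ‖q.2-p2‖^2 := by positivity
    simp only
    linarith
  · have := hp1.prodMk_nhds hp2
    simpa using this
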